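/- Let G be a group and let n, j be positive integers with 1 ≤ j ≤ n. If x ∈ γ_j(G) and y ∈ γ_j(G)^4 · γ_{j+1}(G), then x^{-4^{n-j}} · (xy)^{4^{n-j}} ∈ N_{n+1,j}(G); that is, (xy)^{4^{n-j}} ≡ x^{4^{n-j}} modulo N_{n+1,j}(G). -/

import Mathlib

/-- `H^m`: the subgroup generated by the `m`-th powers of elements of `H`. -/
def sPow {G : Type*} [Group G] (H : Subgroup G) (m : ℕ) : Subgroup G :=
  Subgroup.closure ((fun h => h ^ m) '' (H : Set G))

/-- `γ_n(G)`, the lower central series indexed so that `γ_1(G) = G`. -/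
def gamma (G : Type*) [Group G] (n : ℕ) : Subgroup G :=
  (⊤ : Subgroup G).lowerCentralSeries (n - 1)

/-- `N_{n,k}(G) = γ_k(G)^{4^{n-k}} ⋯ γ_n(G)` (product of normal subgroups = join). -/
def Nnk (G : Type*) [Group G] (n k : ℕ) : Subgroup G :=
  ⨆ i ∈ Finset.Icc k n, sPow (gamma G i) (4 ^ (n - i))

/-- The `λ̄`-series: `λ̄_1(G) = G`, `λ̄_{n+1}(G) = λ̄_n(G)^4 [λ̄_n(G), G]`. -/
def lambdaBar (G : Type*) [Group G] : ℕ → Subgroup G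
  | 0 => ⊤
  | 1 => ⊤
  | (n + 2) => sPow (lambdaBar G (n + 1)) 4 ⊔ ⁅lambdaBar G (n + 1), (⊤ : Subgroup G)⁆

/-- The lower `p`-central series: `λ_1(G) = G`, `λ_{n+1}(G) = λ_n(G)^p [λ_n(G), G]`. -/
def lowP (G : Type*) [Group G] (p : ℕ) : ℕ → Subgroup G
  | 0 => ⊤
  | 1 => ⊤
  | (n + 2) => sPow (lowP G p (n + 1)) p ⊔ ⁅lowP G p (n + 1), (⊤ : Subgroup G)⁆

/-- `Ω_i(G)`: subgroup generated by elements of order dividing `p^i`. -/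
def Omega (G : Type*) [Group G] (p i : ℕ) : Subgroup G :=
  Subgroup.closure {x : G | x ^ p ^ i = 1}

/-- A finite `p`-group is `p`-central if `Ω_1(G) ≤ Z(G)` for odd `p`,
resp. `Ω_2(G) ≤ Z(G)` for `p = 2`. -/
def IsPCentral (p : ℕ) (G : Type*) [Group G] : Prop :=
  if p = 2 then Omega G 2 2 ≤ Subgroup.center G else Omega G p 1 ≤ Subgroup.center G

instance gamma_normal (G : Type*) [Group G] (n : ℕ) : (gamma G n).Normal :=
  inferInstanceAs ((⊤ : Subgroup G).lowerCentralSeries (n - 1)).Normal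

instance sPow_normal {G : Type*} [Group G] (H : Subgroup G) [hH : H.Normal] (m : ℕ) :
    (sPow H m).Normal := by
  constructor
  intro x hx g
  induction hx using Subgroup.closure_induction with
  | mem y hy =>
    obtain ⟨h, hh, rfl⟩ := hy
    exact Subgroup.subset_closure ⟨g * h * g⁻¹, hH.conj_mem h hh g, by
      simp [conj_pow]⟩
  | one => simpa using (sPow H m).one_mem
  | mul a b _ _ ha hb =>
    have : g * (a * b) * g⁻¹ = (g * a * g⁻¹) * (g * b * g⁻¹) := by group
    rw [this]; exact (sPow H m).mul_mem ha hb
  | inv a _ ha =>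
    have : g * a⁻¹ * g⁻¹ = (g * a * g⁻¹)⁻¹ := by group
    rw [this]; exact (sPow H m).inv_mem ha

theorem normal_iSup {G : Type*} [Group G] {ι : Sort*} (f : ι → Subgroup G)
    (h : ∀ i, (f i).Normal) : (⨆ i, f i).Normal := by
  constructor
  intro x hx g
  refine Subgroup.iSup_induction f (C := fun y => g * y * g⁻¹ ∈ ⨆ i, f i) hx
    (fun i y hy => Subgroup.mem_iSup_of_mem i ((h i).conj_mem y hy g)) (by simpa using Subgroup.one_mem (⨆ i, f i)) ?_
  intro a b ha hb
  have : g * (a * b) * g⁻¹ = (g * a * g⁻¹) * (g * b * g⁻¹) := by group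
  rw [this]; exact Subgroup.mul_mem _ ha hb

instance Nnk_normal (G : Type*) [Group G] (n k : ℕ) : (Nnk G n k).Normal :=
  normal_iSup _ fun i => normal_iSup _ fun _ => inferInstance

instance lambdaBar_normal (G : Type*) [Group G] : ∀ n, (lambdaBar G n).Normal
  | 0 => inferInstanceAs (⊤ : Subgroup G).Normal
  | 1 => inferInstanceAs (⊤ : Subgroup G).Normal
  | (n + 2) => by
    haveI := lambdaBar_normal G (n + 1)
    exact inferInstanceAs
      (sPow (lambdaBar G (n + 1)) 4 ⊔ ⁅lambdaBar G (n + 1), (⊤ : Subgroup G)⁆).Normal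

instance lowP_normal (G : Type*) [Group G] (p : ℕ) : ∀ n, (lowP G p n).Normal
  | 0 => inferInstanceAs (⊤ : Subgroup G).Normal
  | 1 => inferInstanceAs (⊤ : Subgroup G).Normal
  | (n + 2) => by
    haveI := lowP_normal G p (n + 1)
    exact inferInstanceAs
      (sPow (lowP G p (n + 1)) p ⊔ ⁅lowP G p (n + 1), (⊤ : Subgroup G)⁆).Normal


section Aux

open Subgroup

open scoped commutatorElement

variable {G : Type*} [Group G]

lemma mem_sPow {H : Subgroup G} {m : ℕ} {x : G} (hx : x ∈ H) : x ^ m ∈ sPow H m :=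
  Subgroup.subset_closure ⟨x, hx, rfl⟩

lemma sPow_le {H : Subgroup G} {K : Subgroup G} {m : ℕ} (h : ∀ x ∈ H, x ^ m ∈ K) :
    sPow H m ≤ K := by
  rw [sPow, Subgroup.closure_le]
  rintro _ ⟨x, hx, rfl⟩
  exact h x hx

/-- The generating set of `Nnk`. -/
def NnkSet (G : Type*) [Group G] (n k : ℕ) : Set G :=
  ⋃ i ∈ Finset.Icc k n, (fun h => h ^ 4 ^ (n - i)) '' (gamma G i : Set G)

lemma Nnk_eq_closure (n k : ℕ) : Nnk G n k = Subgroup.closure (NnkSet G n k) := by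
  simp only [Nnk, sPow, NnkSet, Subgroup.closure_iUnion]

lemma mem_NnkSet {n k i : ℕ} (h1 : k ≤ i) (h2 : i ≤ n) {x : G} (hx : x ∈ gamma G i) :
    x ^ 4 ^ (n - i) ∈ NnkSet G n k :=
  Set.mem_biUnion (Finset.mem_Icc.mpr ⟨h1, h2⟩) ⟨x, hx, rfl⟩

lemma mem_Nnk {n k i : ℕ} (h1 : k ≤ i) (h2 : i ≤ n) {x : G} (hx : x ∈ gamma G i) :
    x ^ 4 ^ (n - i) ∈ Nnk G n k := by
  rw [Nnk_eq_closure]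
  exact Subgroup.subset_closure (mem_NnkSet h1 h2 hx)

lemma Nnk_mono {n k k' : ℕ} (h : k' ≤ k) : Nnk G n k ≤ Nnk G n k' := by
  apply iSup₂_le
  intro i hi
  rcases Finset.mem_Icc.mp hi with ⟨h1, h2⟩
  exact le_iSup₂ (f := fun i (_ : i ∈ Finset.Icc k' n) => sPow (gamma G i) (4 ^ (n - i)))
    i (Finset.mem_Icc.mpr ⟨le_trans h h1, h2⟩)

lemma comm_mem_gamma {i : ℕ} {h : G} (hh : h ∈ gamma G i) (g : G) :
    ⁅h, g⁆ ∈ gamma G (i + 1) := by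
  cases i with
  | zero => exact Subgroup.mem_top _
  | succ i =>
    show ⁅h, g⁆ ∈ (⊤ : Subgroup G).lowerCentralSeries (i + 1)
    rw [Subgroup.mem_lowerCentralSeries_succ_iff]
    exact Subgroup.subset_closure ⟨h, hh, g, Subgroup.mem_top g, rfl⟩

lemma comm_closure {S : Set G} {N : Subgroup G} [hN : N.Normal]
    (hgen : ∀ s ∈ S, ∀ g : G, ⁅s, g⁆ ∈ N) :
    ∀ z ∈ Subgroup.closure S, ∀ g : G, ⁅z, g⁆ ∈ N := by
  intro z hz
  induction hz using Subgroup.closure_induction with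
  | mem s hs => exact hgen s hs
  | one =>
    intro g
    have h1 : ⁅(1 : G), g⁆ = 1 := by group
    rw [h1]; exact N.one_mem
  | mul a b _ _ ha hb =>
    intro g
    have h1 : ⁅a * b, g⁆ = a * ⁅b, g⁆ * a⁻¹ * ⁅a, g⁆ := by group
    rw [h1]
    exact N.mul_mem (hN.conj_mem _ (hb g) a) (ha g)
  | inv a _ ha =>
    intro g
    have h1 : ⁅a⁻¹, g⁆ = a⁻¹ * ⁅a, g⁆⁻¹ * a⁻¹⁻¹ := by group
    rw [h1]
    exact hN.conj_mem _ (N.inv_mem (ha g)) a⁻¹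

lemma mk_commutator {N : Subgroup G} [N.Normal] (a b : G) :
    ⁅((a : G ⧸ N)), ((b : G ⧸ N))⁆ = ((⁅a, b⁆ : G) : G ⧸ N) := by
  simp [commutatorElement_def]

lemma central_quot {N : Subgroup G} [N.Normal] {z : G}
    (hz : ∀ g : G, ⁅z, g⁆ ∈ N) (w : G ⧸ N) : Commute ((z : G ⧸ N)) w := by
  obtain ⟨g, rfl⟩ := QuotientGroup.mk_surjective w
  rw [← commutatorElement_eq_one_iff_commute, mk_commutator, QuotientGroup.eq_one_iff]
  exact hz g

lemma mk_pow' {N : Subgroup G} [N.Normal] (a : G) (q : ℕ) :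
    ((a : G ⧸ N)) ^ q = ((a ^ q : G) : G ⧸ N) :=
  (map_pow (QuotientGroup.mk' N) a q).symm

lemma pow_closure {S : Set G} {N : Subgroup G} [N.Normal] {q : ℕ}
    (hcomm : ∀ z ∈ Subgroup.closure S, ∀ g : G, ⁅z, g⁆ ∈ N)
    (hgen : ∀ s ∈ S, s ^ q ∈ N) :
    ∀ z ∈ Subgroup.closure S, z ^ q ∈ N := by
  have key : ∀ z ∈ Subgroup.closure S, ((z : G ⧸ N)) ^ q = 1 := by
    intro z hz
    induction hz using Subgroup.closure_induction with
    | mem s hs => rw [mk_pow', QuotientGroup.eq_one_iff]; exact hgen s hs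
    | one => simp
    | mul a b ha' hb' ha hb =>
      have hc : Commute ((a : G ⧸ N)) ((b : G ⧸ N)) :=
        central_quot (fun g => hcomm a ha' g) _
      show (((a : G) : G ⧸ N) * ((b : G) : G ⧸ N)) ^ q = 1
      rw [hc.mul_pow, ha, hb, one_mul]
    | inv a ha' ha =>
      show (((a : G) : G ⧸ N))⁻¹ ^ q = 1
      rw [inv_pow, ha, inv_one]
  intro z hz
  rw [← QuotientGroup.eq_one_iff, ← mk_pow']
  exact key z hz

/-- If `⁅a,g⁆` is central then `⁅a^k, g⁆ = ⁅a,g⁆^k`. -/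
lemma commutator_pow_left {Q : Type*} [Group Q] (a g : Q)
    (hc : ∀ w : Q, Commute ⁅a, g⁆ w) (k : ℕ) : ⁅a ^ k, g⁆ = ⁅a, g⁆ ^ k := by
  set c := ⁅a, g⁆ with hcdef
  have base : a * g = c * (g * a) := by rw [hcdef, commutatorElement_def]; group
  have key : ∀ m : ℕ, a ^ m * g = c ^ m * (g * a ^ m) := by
    intro m
    induction m with
    | zero => simp
    | succ m ih =>
      calc a ^ (m + 1) * g = a ^ m * (a * g) := by rw [pow_succ, mul_assoc]
        _ = a ^ m * (c * (g * a)) := by rw [base]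
        _ = c * (a ^ m * (g * a)) := by
            rw [← mul_assoc, ← (hc (a ^ m)).eq, mul_assoc]
        _ = c * ((a ^ m * g) * a) := by rw [mul_assoc]
        _ = c * ((c ^ m * (g * a ^ m)) * a) := by rw [ih]
        _ = c ^ (m + 1) * (g * a ^ (m + 1)) := by
            rw [pow_succ, pow_succ]
            group
  have : a ^ k * g = c ^ k * (g * a ^ k) := key k
  rw [commutatorElement_def, this]
  group

/-- Key commutator lemma: for `h ∈ γ_i`, `⁅h^{4^t}, g⁆ ∈ N_{i+t+1, i+1}`. -/
lemma comm_pow_mem_Nnk : ∀ t : ℕ, ∀ i : ℕ, ∀ h g : G, h ∈ gamma G i →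
    ⁅h ^ 4 ^ t, g⁆ ∈ Nnk G (i + t + 1) (i + 1) := by
  intro t
  induction t using Nat.strong_induction_on with
  | _ t IH =>
    match t with
    | 0 =>
      intro i h g hh
      have h1 : ⁅h ^ 4 ^ 0, g⁆ = ⁅h, g⁆ ^ 4 ^ ((i + 0 + 1) - (i + 1)) := by
        simp
      rw [h1]
      exact mem_Nnk le_rfl (by omega) (comm_mem_gamma hh g)
    | (t + 1) =>
      intro i h g hh
      -- M = N_{i+t+1, i+1}, N' = N_{i+t+2, i+1}
      set N' : Subgroup G := Nnk G (i + t + 2) (i + 1) with hN'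
      -- commutators of generators of M land in N'
      have hcommgen : ∀ s ∈ NnkSet G (i + t + 1) (i + 1), ∀ g' : G, ⁅s, g'⁆ ∈ N' := by
        rintro s hs g'
        simp only [NnkSet, Set.mem_iUnion] at hs
        obtain ⟨i', hi', h', hh', rfl⟩ := hs
        rcases Finset.mem_Icc.mp hi' with ⟨hi1, hi2⟩
        have := IH ((i + t + 1) - i') (by omega) i' h' g' hh'
        have harith : i' + ((i + t + 1) - i') + 1 = i + t + 2 := by omega
        rw [harith] at this
        exact Nnk_mono (by omega) this
      have hcomm : ∀ z ∈ Nnk G (i + t + 1) (i + 1), ∀ g' : G, ⁅z, g'⁆ ∈ N' := by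
        rw [Nnk_eq_closure]
        exact comm_closure hcommgen
      -- fourth powers of elements of M land in N'
      have hpow : ∀ z ∈ Nnk G (i + t + 1) (i + 1), z ^ 4 ∈ N' := by
        rw [Nnk_eq_closure]
        apply pow_closure (fun z hz => hcomm z (by rw [Nnk_eq_closure]; exact hz))
        rintro s hs
        simp only [NnkSet, Set.mem_iUnion] at hs
        obtain ⟨i', hi', h', hh', rfl⟩ := hs
        rcases Finset.mem_Icc.mp hi' with ⟨hi1, hi2⟩
        have harith : (i + t + 1) - i' + 1 = (i + t + 2) - i' := by omega
        have h1 : (h' ^ 4 ^ ((i + t + 1) - i')) ^ 4 = h' ^ 4 ^ ((i + t + 2) - i') := by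
          rw [← pow_mul, ← pow_succ, harith]
        rw [h1]
        exact mem_Nnk hi1 (by omega) hh'
      -- now work in the quotient
      have hc : ⁅h ^ 4 ^ t, g⁆ ∈ Nnk G (i + t + 1) (i + 1) := IH t (by omega) i h g hh
      rw [show i + (t + 1) + 1 = i + t + 2 by omega, ← hN', ← QuotientGroup.eq_one_iff]
      have hcentral : ∀ w : G ⧸ N',
          Commute ⁅((h ^ 4 ^ t : G) : G ⧸ N'), ((g : G) : G ⧸ N')⁆ w := by
        rw [mk_commutator]
        exact fun w => central_quot (fun g' => hcomm _ hc g') w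
      have hp : h ^ 4 ^ (t + 1) = (h ^ 4 ^ t) ^ 4 := by rw [← pow_mul, ← pow_succ]
      have step : ((⁅h ^ 4 ^ (t + 1), g⁆ : G) : G ⧸ N') =
          ⁅((h ^ 4 ^ t : G) : G ⧸ N'), ((g : G) : G ⧸ N')⁆ ^ 4 := by
        rw [hp, ← mk_commutator, ← mk_pow', commutator_pow_left _ _ hcentral 4]
      rw [step, mk_commutator, mk_pow', QuotientGroup.eq_one_iff]
      exact hpow _ hc

/-- Main induction: `(xy)^{4^d} ≡ x^{4^d}` mod `N_{j+d+1, j}`. -/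
lemma main_aux : ∀ d j : ℕ, ∀ x y : G, x ∈ gamma G j →
    y ∈ sPow (gamma G j) 4 ⊔ gamma G (j + 1) →
    (x ^ 4 ^ d)⁻¹ * (x * y) ^ 4 ^ d ∈ Nnk G (j + d + 1) j := by
  intro d
  induction d with
  | zero =>
    intro j x y hx hy
    have h1 : (x ^ 4 ^ 0)⁻¹ * (x * y) ^ 4 ^ 0 = y := by group
    rw [h1]
    have hle : sPow (gamma G j) 4 ⊔ gamma G (j + 1) ≤ Nnk G (j + 0 + 1) j := by
      apply sup_le
      · apply sPow_le
        intro a ha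
        have h2 := mem_Nnk (le_refl j) (by omega : j ≤ j + 0 + 1) ha
        rwa [show j + 0 + 1 - j = 1 by omega, pow_one] at h2
      · intro a ha
        have h2 := mem_Nnk (by omega : j ≤ j + 1) (by omega : j + 1 ≤ j + 0 + 1) ha
        rwa [show j + 0 + 1 - (j + 1) = 0 by omega, pow_zero, pow_one] at h2
    exact hle hy
  | succ d IH =>
    intro j x y hx hy
    set N' : Subgroup G := Nnk G (j + d + 2) j with hN'
    have hz : (x ^ 4 ^ d)⁻¹ * (x * y) ^ 4 ^ d ∈ Nnk G (j + d + 1) j := IH j x y hx hy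
    set z : G := (x ^ 4 ^ d)⁻¹ * (x * y) ^ 4 ^ d with hzdef
    have hxy : (x * y) ^ 4 ^ d = x ^ 4 ^ d * z := by rw [hzdef]; group
    have hcommgen : ∀ s ∈ NnkSet G (j + d + 1) j, ∀ g' : G, ⁅s, g'⁆ ∈ N' := by
      rintro s hs g'
      simp only [NnkSet, Set.mem_iUnion] at hs
      obtain ⟨i', hi', h', hh', rfl⟩ := hs
      rcases Finset.mem_Icc.mp hi' with ⟨hi1, hi2⟩
      have h3 := comm_pow_mem_Nnk ((j + d + 1) - i') i' h' g' hh'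
      rw [show i' + ((j + d + 1) - i') + 1 = j + d + 2 by omega] at h3
      exact Nnk_mono (by omega) h3
    have hcomm : ∀ w ∈ Nnk G (j + d + 1) j, ∀ g' : G, ⁅w, g'⁆ ∈ N' := by
      rw [Nnk_eq_closure]
      exact comm_closure hcommgen
    have hpow : ∀ w ∈ Nnk G (j + d + 1) j, w ^ 4 ∈ N' := by
      rw [Nnk_eq_closure]
      apply pow_closure (fun w hw => hcomm w (by rw [Nnk_eq_closure]; exact hw))
      rintro s hs
      simp only [NnkSet, Set.mem_iUnion] at hs
      obtain ⟨i', hi', h', hh', rfl⟩ := hs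
      rcases Finset.mem_Icc.mp hi' with ⟨hi1, hi2⟩
      have harith : (j + d + 1) - i' + 1 = (j + d + 2) - i' := by omega
      have h1 : (h' ^ 4 ^ ((j + d + 1) - i')) ^ 4 = h' ^ 4 ^ ((j + d + 2) - i') := by
        rw [← pow_mul, ← pow_succ, harith]
      rw [h1]
      exact mem_Nnk hi1 (by omega) hh'
    have hzc : ∀ w : G ⧸ N', Commute ((z : G ⧸ N')) w :=
      central_quot (fun g' => hcomm z hz g')
    show (x ^ 4 ^ (d + 1))⁻¹ * (x * y) ^ 4 ^ (d + 1) ∈ Nnk G (j + d + 2) j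
    rw [← hN', ← QuotientGroup.eq_one_iff]
    have hxm4 : (x * y) ^ 4 ^ (d + 1) = ((x * y) ^ 4 ^ d) ^ 4 := by
      rw [← pow_mul, ← pow_succ]
    have hx4 : x ^ 4 ^ (d + 1) = (x ^ 4 ^ d) ^ 4 := by rw [← pow_mul, ← pow_succ]
    have key : (((x ^ 4 ^ (d + 1))⁻¹ * (x * y) ^ 4 ^ (d + 1) : G) : G ⧸ N') =
        ((z ^ 4 : G) : G ⧸ N') := by
      rw [hxm4, hx4, hxy]
      simp only [QuotientGroup.mk_mul, QuotientGroup.mk_inv, ← mk_pow']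
      rw [((hzc _).symm).mul_pow]
      group
    rw [key, QuotientGroup.eq_one_iff]
    exact hpow z hz

end Aux

theorem stmt_7 (G : Type*) [Group G] (n j : ℕ) (hj : 1 ≤ j) (hjn : j ≤ n)
    (x y : G) (hx : x ∈ gamma G j) (hy : y ∈ sPow (gamma G j) 4 ⊔ gamma G (j + 1)) :
    (x ^ 4 ^ (n - j))⁻¹ * (x * y) ^ 4 ^ (n - j) ∈ Nnk G (n + 1) j := by
  have h := main_aux (n - j) j x y hx hy
  rwa [show j + (n - j) + 1 = n + 1 by omega] at h
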